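/- Let f: [0,T] → ℝ be Lebesgue integrable, g: [0,T] → ℝ bounded measurable, and 1_n: [0,T] → {0,1} any sequence of measurable indicator functions. Let Δ_n → 0 with Δ_n > 0. Then ∫_{Δ_n}^{T} 1_n(r)·(1/Δ_n)·∫_{r−Δ_n}^{r} g(s)·(f(r) − f(s)) ds dr → 0 as n → ∞. -/

import Mathlib

open MeasureTheory Filter
open Set
open scoped ENNReal NNReal

lemma ofReal_norm_eq_coe_nnnorm {E : Type*} [SeminormedAddCommGroup E] (a : E) :
    ENNReal.ofReal ‖a‖ = (‖a‖₊ : ℝ≥0∞) := ofReal_norm a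

lemma measurable_ennnorm {E : Type*} [SeminormedAddCommGroup E] [MeasurableSpace E]
    [OpensMeasurableSpace E] : Measurable (fun x : E => (‖x‖₊ : ℝ≥0∞)) := measurable_enorm

lemma trans_cont (F : ℝ → ℝ) (hFm : Measurable F) (hFi : Integrable F)
    {ε : ℝ} (hε : 0 < ε) :
    ∃ δ > (0:ℝ), ∀ u : ℝ, |u| < δ →
      ∫⁻ x, ‖F x - F (x - u)‖₊ ≤ ENNReal.ofReal ε := by
  have hε3 : (0:ℝ) < ε / 3 := by linarith
  obtain ⟨G, hGsupp, hGF, hGcont, hGint⟩ :=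
    hFi.exists_hasCompactSupport_lintegral_sub_le
      (ε := ENNReal.ofReal (ε/3)) (ENNReal.ofReal_pos.2 hε3).ne'
  obtain ⟨M, hM⟩ := hGsupp.exists_bound_of_continuous hGcont
  set K : Set ℝ := Metric.cthickening 1 (tsupport G) with hK
  have hKcomp : IsCompact K := hGsupp.cthickening
  have hKmeas : MeasurableSet K := hKcomp.measurableSet
  have hKvol : volume K < ⊤ := hKcomp.measure_lt_top
  -- dominated convergence for Ψ
  have hΨ : Tendsto (fun u => ∫⁻ x, ‖G x - G (x - u)‖₊) (nhds 0) (nhds 0) := by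
    have h0 : Tendsto (fun u => ∫⁻ x, ‖G x - G (x - u)‖₊)
        (nhds 0) (nhds (∫⁻ _x : ℝ, 0)) := by
      apply tendsto_lintegral_filter_of_dominated_convergence
        (K.indicator fun _ => ENNReal.ofReal (2 * M))
      · exact Eventually.of_forall fun u =>
          (measurable_ennnorm.comp ((hGcont.measurable).sub
            ((hGcont.measurable).comp (measurable_id.sub_const u))))
      · filter_upwards [Metric.ball_mem_nhds (0:ℝ) one_pos] with u hu
        have hu1 : |u| ≤ 1 := by simpa [Real.dist_eq] using (Metric.mem_ball.1 hu).le
        refine Eventually.of_forall fun x => ?_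
        by_cases hx : x ∈ K
        · rw [Set.indicator_of_mem hx]
          have h1 : ‖G x - G (x - u)‖ ≤ 2 * M := by
            calc ‖G x - G (x - u)‖ ≤ ‖G x‖ + ‖G (x - u)‖ := norm_sub_le _ _
              _ ≤ 2 * M := by have := hM x; have := hM (x - u); linarith
          rw [← ofReal_norm_eq_coe_nnnorm]
          exact ENNReal.ofReal_le_ofReal h1
        · rw [Set.indicator_of_notMem hx]
          have hx1 : x ∉ tsupport G := fun h => hx (Metric.self_subset_cthickening _ h)
          have hx2 : x - u ∉ tsupport G := by
            intro h
            apply hx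
            apply Metric.mem_cthickening_of_dist_le x (x - u) 1 _ h
            rw [dist_eq_norm]
            simp only [sub_sub_cancel]
            simpa [Real.norm_eq_abs] using hu1
          simp [image_eq_zero_of_notMem_tsupport hx1, image_eq_zero_of_notMem_tsupport hx2]
      · rw [lintegral_indicator hKmeas]
        simp only [lintegral_const, Measure.restrict_apply MeasurableSet.univ, Set.univ_inter]
        exact ENNReal.mul_lt_top ENNReal.ofReal_lt_top hKvol |>.ne
      · refine Eventually.of_forall fun x => ?_
        have : Tendsto (fun u : ℝ => ‖G x - G (x - u)‖₊) (nhds 0) (nhds ‖G x - G (x - 0)‖₊) := by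
          exact ((continuous_const.sub (hGcont.comp (continuous_const.sub continuous_id))).nnnorm).tendsto 0
        simpa using ENNReal.tendsto_coe.2 this
    rwa [lintegral_zero] at h0
  -- choose δ
  have hmem : ∀ᶠ u in nhds (0:ℝ), (∫⁻ x, ‖G x - G (x - u)‖₊) < ENNReal.ofReal (ε/3) :=
    hΨ.eventually (gt_mem_nhds (ENNReal.ofReal_pos.2 hε3))
  rw [Metric.eventually_nhds_iff] at hmem
  obtain ⟨δ, hδpos, hδ⟩ := hmem
  refine ⟨δ, hδpos, fun u hu => ?_⟩
  have hΨu := (hδ (by simpa [Real.dist_eq] using hu)).le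
  -- triangle inequality
  have key : ∀ x, (‖F x - F (x - u)‖₊ : ℝ≥0∞) ≤
      ‖F x - G x‖₊ + ‖G x - G (x - u)‖₊ + ‖G (x - u) - F (x - u)‖₊ := by
    intro x
    have : ‖F x - F (x - u)‖ ≤ ‖F x - G x‖ + ‖G x - G (x - u)‖ + ‖G (x - u) - F (x - u)‖ := by
      have := norm_sub_le_norm_sub_add_norm_sub (F x) (G x) (F (x - u))
      have := norm_sub_le_norm_sub_add_norm_sub (G x) (G (x - u)) (F (x - u))
      linarith
    rw [← ofReal_norm_eq_coe_nnnorm, ← ofReal_norm_eq_coe_nnnorm,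
      ← ofReal_norm_eq_coe_nnnorm, ← ofReal_norm_eq_coe_nnnorm,
      ← ENNReal.ofReal_add (by positivity) (by positivity),
      ← ENNReal.ofReal_add (by positivity) (by positivity)]
    exact ENNReal.ofReal_le_ofReal this
  have hmeas2 : Measurable fun x => (‖G x - G (x - u)‖₊ : ℝ≥0∞) := by fun_prop
  have hmeas3 : Measurable fun x => (‖G (x - u) - F (x - u)‖₊ : ℝ≥0∞) := by fun_prop
  have h3 : (∫⁻ x, (‖G (x - u) - F (x - u)‖₊ : ℝ≥0∞)) ≤ ENNReal.ofReal (ε/3) := by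
    have heq := (measurePreserving_sub_right (volume : Measure ℝ) u).lintegral_comp
      (f := fun x => (‖G x - F x‖₊ : ℝ≥0∞)) (by fun_prop)
    calc (∫⁻ x, (‖G (x - u) - F (x - u)‖₊ : ℝ≥0∞)) = ∫⁻ x, ‖G x - F x‖₊ := heq
      _ = ∫⁻ x, ‖F x - G x‖₊ :=
          lintegral_congr fun x => by rw [← nnnorm_neg (G x - F x), neg_sub]
      _ ≤ _ := hGF
  calc ∫⁻ x, ‖F x - F (x - u)‖₊
      ≤ ∫⁻ x, (‖F x - G x‖₊ + ‖G x - G (x - u)‖₊ + ‖G (x - u) - F (x - u)‖₊) :=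
        lintegral_mono key
    _ = (∫⁻ x, ‖F x - G x‖₊) + (∫⁻ x, ‖G x - G (x - u)‖₊)
        + ∫⁻ x, ‖G (x - u) - F (x - u)‖₊ := by
        rw [lintegral_add_right _ hmeas3, lintegral_add_right _ hmeas2]
    _ ≤ ENNReal.ofReal (ε/3) + ENNReal.ofReal (ε/3) + ENNReal.ofReal (ε/3) :=
        add_le_add (add_le_add hGF hΨu) h3
    _ ≤ ENNReal.ofReal ε := by
        rw [← ENNReal.ofReal_add hε3.le hε3.le, ← ENNReal.ofReal_add (by linarith) hε3.le]
        exact ENNReal.ofReal_le_ofReal (by linarith)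

theorem sliding_average_difference_tendsto_zero
    (T : ℝ) (hT : 0 < T)
    (f : ℝ → ℝ) (hf_int : IntegrableOn f (Set.Icc 0 T))
    (g : ℝ → ℝ) (hg_meas : Measurable g) (Cg : ℝ) (hg_bdd : ∀ s, |g s| ≤ Cg)
    (ind : ℕ → ℝ → ℝ) (hind_meas : ∀ n, Measurable (ind n))
    (hind01 : ∀ n r, ind n r = 0 ∨ ind n r = 1)
    (Δ : ℕ → ℝ) (hΔ_pos : ∀ n, 0 < Δ n) (hΔ_lim : Tendsto Δ atTop (nhds 0)) :
    Tendsto (fun n => ∫ r in Set.Icc (Δ n) T,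
        ind n r * ((1 / Δ n) * ∫ s in Set.Icc (r - Δ n) r, g s * (f r - f s)))
      atTop (nhds 0) := by
  have hCg0 : 0 ≤ Cg := (abs_nonneg _).trans (hg_bdd 0)
  -- measurable representative
  have hfae : AEStronglyMeasurable f (volume.restrict (Icc 0 T)) :=
    hf_int.aestronglyMeasurable
  set f' : ℝ → ℝ := hfae.mk f with hf'def
  have hf'm : Measurable f' := hfae.stronglyMeasurable_mk.measurable
  have hff' : f =ᵐ[volume.restrict (Icc 0 T)] f' := hfae.ae_eq_mk
  have hf'int : IntegrableOn f' (Icc 0 T) := hf_int.congr hff'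
  have hglob : ∀ᵐ x ∂(volume : Measure ℝ), x ∈ Icc 0 T → f x = f' x :=
    (ae_restrict_iff' measurableSet_Icc).1 hff'
  -- replace f by f'
  have hEq : ∀ n, (∫ r in Set.Icc (Δ n) T,
        ind n r * ((1 / Δ n) * ∫ s in Set.Icc (r - Δ n) r, g s * (f r - f s)))
      = ∫ r in Set.Icc (Δ n) T,
        ind n r * ((1 / Δ n) * ∫ s in Set.Icc (r - Δ n) r, g s * (f' r - f' s)) := by
    intro n
    apply setIntegral_congr_ae measurableSet_Icc
    filter_upwards [hglob] with r hr hrmem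
    have hr0T : r ∈ Icc 0 T := ⟨(hΔ_pos n).le.trans hrmem.1, hrmem.2⟩
    have hfr : f r = f' r := hr hr0T
    rw [hfr]
    congr 2
    apply setIntegral_congr_ae measurableSet_Icc
    filter_upwards [hglob] with s hs hsmem
    have hs0T : s ∈ Icc 0 T :=
      ⟨le_trans (by linarith [hrmem.1, (hΔ_pos n).le]) hsmem.1, hsmem.2.trans hrmem.2⟩
    rw [hs hs0T]
  simp only [hEq]

  -- now work with F
  set F : ℝ → ℝ := (Icc 0 T).indicator f' with hFdef
  have hFm : Measurable F := hf'm.indicator measurableSet_Icc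
  have hFi : Integrable F := hf'int.integrable_indicator measurableSet_Icc
  rw [NormedAddCommGroup.tendsto_nhds_zero]
  intro ε hε
  set ε' : ℝ := ε / (Cg + 1) with hε'def
  have hε' : 0 < ε' := div_pos hε (by linarith)
  obtain ⟨δ, hδpos, hδ⟩ := trans_cont F hFm hFi hε'
  filter_upwards [hΔ_lim.eventually (gt_mem_nhds hδpos)] with n hn
  set D : ℝ := Δ n with hDdef
  have hD : 0 < D := hΔ_pos n
  -- the big estimate
  have key : (‖∫ r in Set.Icc D T,
        ind n r * ((1 / D) * ∫ s in Set.Icc (r - D) r, g s * (f' r - f' s))‖₊ : ℝ≥0∞)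
      ≤ ENNReal.ofReal (Cg * ε') := by
    have step4 : ∀ r : ℝ, (∫⁻ s in Icc (r - D) r, (‖F r - F s‖₊ : ℝ≥0∞))
        = ∫⁻ u in Icc 0 D, (‖F r - F (r - u)‖₊ : ℝ≥0∞) := by
      intro r
      have hmp : MeasurePreserving (fun u : ℝ => r - u) volume volume :=
        Measure.measurePreserving_sub_left volume r
      have hemb : MeasurableEmbedding (fun u : ℝ => r - u) :=
        (MeasurableEquiv.subLeft r).measurableEmbedding
      have h := hmp.setLIntegral_comp_emb hemb (fun s => (‖F r - F s‖₊ : ℝ≥0∞)) (Icc 0 D)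
      rw [Set.image_const_sub_Icc, sub_zero] at h
      exact h.symm
    calc (‖∫ r in Set.Icc D T,
          ind n r * ((1 / D) * ∫ s in Set.Icc (r - D) r, g s * (f' r - f' s))‖₊ : ℝ≥0∞)
        ≤ ∫⁻ r in Icc D T,
            ‖ind n r * ((1 / D) * ∫ s in Set.Icc (r - D) r, g s * (f' r - f' s))‖₊ :=
          enorm_integral_le_lintegral_enorm _
      _ ≤ ∫⁻ r in Icc D T, (ENNReal.ofReal (1/D) * ENNReal.ofReal Cg)
            * ∫⁻ s in Icc (r - D) r, (‖F r - F s‖₊ : ℝ≥0∞) := by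
          apply lintegral_mono_ae
          filter_upwards [ae_restrict_mem measurableSet_Icc] with r hr
          have hr0T : r ∈ Icc 0 T := ⟨hD.le.trans hr.1, hr.2⟩
          have hFr : F r = f' r := Set.indicator_of_mem hr0T f'
          have hindle : (‖ind n r‖₊ : ℝ≥0∞) ≤ 1 := by
            rcases hind01 n r with h | h <;> simp [h]
          have hinner : (‖∫ s in Set.Icc (r - D) r, g s * (f' r - f' s)‖₊ : ℝ≥0∞)
              ≤ ENNReal.ofReal Cg * ∫⁻ s in Icc (r - D) r, (‖F r - F s‖₊ : ℝ≥0∞) := by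
            refine (enorm_integral_le_lintegral_enorm _).trans ?_
            rw [← lintegral_const_mul' _ _ ENNReal.ofReal_ne_top]
            apply lintegral_mono_ae
            filter_upwards [ae_restrict_mem measurableSet_Icc] with s hs
            have hs0T : s ∈ Icc 0 T := ⟨by linarith [hr.1, hs.1], hs.2.trans hr.2⟩
            have hFs : F s = f' s := Set.indicator_of_mem hs0T f'
            rw [← hFr, ← hFs, enorm_eq_nnnorm, nnnorm_mul, ENNReal.coe_mul]
            apply mul_le_mul' _ le_rfl
            rw [← ofReal_norm_eq_coe_nnnorm]
            exact ENNReal.ofReal_le_ofReal ((Real.norm_eq_abs _).le.trans (hg_bdd s))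
          calc (‖ind n r * ((1 / D) * ∫ s in Set.Icc (r - D) r, g s * (f' r - f' s))‖₊ : ℝ≥0∞)
              = ↑‖ind n r‖₊ * (↑‖(1/D : ℝ)‖₊
                * ↑‖∫ s in Set.Icc (r - D) r, g s * (f' r - f' s)‖₊) := by
                rw [nnnorm_mul, nnnorm_mul, ENNReal.coe_mul, ENNReal.coe_mul]
            _ ≤ 1 * (ENNReal.ofReal (1/D)
                * (ENNReal.ofReal Cg * ∫⁻ s in Icc (r - D) r, (‖F r - F s‖₊ : ℝ≥0∞))) := by
                apply mul_le_mul' hindle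
                apply mul_le_mul' _ hinner
                rw [← ofReal_norm_eq_coe_nnnorm, Real.norm_eq_abs,
                  abs_of_nonneg (by positivity : (0:ℝ) ≤ 1/D)]
            _ = (ENNReal.ofReal (1/D) * ENNReal.ofReal Cg)
                * ∫⁻ s in Icc (r - D) r, (‖F r - F s‖₊ : ℝ≥0∞) := by
                rw [one_mul, mul_assoc]
      _ = (ENNReal.ofReal (1/D) * ENNReal.ofReal Cg)
            * ∫⁻ r in Icc D T, ∫⁻ u in Icc 0 D, (‖F r - F (r - u)‖₊ : ℝ≥0∞) := by
          rw [lintegral_const_mul' _ _ (by finiteness)]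
          simp_rw [step4]
      _ = (ENNReal.ofReal (1/D) * ENNReal.ofReal Cg)
            * ∫⁻ u in Icc 0 D, ∫⁻ r in Icc D T, (‖F r - F (r - u)‖₊ : ℝ≥0∞) := by
          rw [lintegral_lintegral_swap]
          apply Measurable.aemeasurable
          fun_prop
      _ ≤ (ENNReal.ofReal (1/D) * ENNReal.ofReal Cg)
            * ∫⁻ _u in Icc 0 D, ENNReal.ofReal ε' := by
          refine mul_le_mul' le_rfl ?_
          apply lintegral_mono_ae
          filter_upwards [ae_restrict_mem measurableSet_Icc] with u hu
          refine (setLIntegral_le_lintegral _ _).trans ?_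
          exact hδ u (by rw [abs_of_nonneg hu.1]; exact lt_of_le_of_lt hu.2 hn)
      _ ≤ ENNReal.ofReal (Cg * ε') := by
          rw [setLIntegral_const, Real.volume_Icc, sub_zero,
            ← ENNReal.ofReal_mul (by positivity), ← ENNReal.ofReal_mul (by positivity),
            ← ENNReal.ofReal_mul (by positivity)]
          apply ENNReal.ofReal_le_ofReal
          have hrel : 1 / D * Cg * (ε' * D) = Cg * ε' := by field_simp
          rw [hrel]
  rw [← ofReal_norm_eq_coe_nnnorm] at key
  have h2 : ‖∫ r in Set.Icc D T,
        ind n r * ((1 / D) * ∫ s in Set.Icc (r - D) r, g s * (f' r - f' s))‖ ≤ Cg * ε' :=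
    (ENNReal.ofReal_le_ofReal_iff (by positivity)).1 key
  have hq : Cg / (Cg + 1) < 1 := (div_lt_one (by linarith)).2 (by linarith)
  have hlt : Cg * ε' < ε := by
    calc Cg * ε' = ε * (Cg / (Cg + 1)) := by rw [hε'def]; ring
      _ < ε * 1 := mul_lt_mul_of_pos_left hq hε
      _ = ε := mul_one ε
  exact lt_of_le_of_lt h2 hlt
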